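/- For every integer ℓ ≥ 3, every finite C_{ℓ+1}-free simple graph G is co-locally (ℓ−1)-colourable, i.e. for every vertex v and every vertex u ≠ v, χ(G[{u} ∪ N(v)]) ≤ ℓ−1. -/

import Mathlib

open SimpleGraph

/-- `σ` is a proper colouring of `G` with colours in `ℕ`. -/
def IsProperColoring {V : Type*} (G : SimpleGraph V) (σ : V → ℕ) : Prop :=
  ∀ ⦃u v : V⦄, G.Adj u v → σ u ≠ σ v

/-- The chromatic number of `G`, as a natural number. -/
noncomputable def chromNum {V : Type*} (G : SimpleGraph V) : ℕ :=
  sInf {n : ℕ | G.Colorable n}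

/-- The discrepancy `φ_σ(G)` of a proper colouring `σ` of `G`: the maximum, over all
induced subgraphs `G[S]` of `G`, of `|σ(S)| - χ(G[S])`. -/
noncomputable def colDisc {V : Type*} (G : SimpleGraph V) (σ : V → ℕ) : ℤ :=
  sSup {z : ℤ | ∃ S : Set V, z = ((σ '' S).ncard : ℤ) - (chromNum (G.induce S) : ℤ)}

/-- The chromatic discrepancy `φ(G)`: the minimum of `φ_σ(G)` over all proper
colourings `σ` of `G`. -/
noncomputable def chromDisc {V : Type*} (G : SimpleGraph V) : ℤ :=
  sInf {z : ℤ | ∃ σ : V → ℕ, IsProperColoring G σ ∧ z = colDisc G σ}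

/-- `G` is locally `s`-colourable: the closed neighbourhood of every vertex induces an
`s`-colourable subgraph. -/
def LocallyColorable {V : Type*} (G : SimpleGraph V) (s : ℕ) : Prop :=
  ∀ v : V, chromNum (G.induce (insert v (G.neighborSet v))) ≤ s

/-- The set of vertices at distance at most `r` from `v` in `G`. -/
def ballSet {V : Type*} (G : SimpleGraph V) (v : V) (r : ℕ) : Set V :=
  {u : V | ∃ w : G.Walk v u, w.length ≤ r}

/-- `G` is `r`-locally `s`-colourable: every ball of radius `r` induces an
`s`-colourable subgraph. -/
def RLocallyColorable {V : Type*} (G : SimpleGraph V) (r s : ℕ) : Prop :=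
  ∀ v : V, chromNum (G.induce (ballSet G v r)) ≤ s

/-- `G` contains no cycle of length exactly `n` as a (not necessarily induced) subgraph. -/
def CycleLenFree {V : Type*} (G : SimpleGraph V) (n : ℕ) : Prop :=
  ∀ (v : V) (w : G.Walk v v), w.IsCycle → w.length ≠ n

/-- `H` is `k`-degenerate: every non-empty (induced) subgraph contains a vertex of
degree at most `k` in it. -/
def Degenerate {α : Type*} (H : SimpleGraph α) (k : ℕ) : Prop :=
  ∀ S : Set α, S.Nonempty → ∃ a ∈ S, {b | b ∈ S ∧ H.Adj a b}.ncard ≤ k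

/-- `G` is co-locally `s`-colourable: for all vertices `u ≠ v`,
`χ(G[{u} ∪ N(v)]) ≤ s`. -/
def CoLocallyColorable {V : Type*} (G : SimpleGraph V) (s : ℕ) : Prop :=
  ∀ v u : V, u ≠ v → chromNum (G.induce (insert u (G.neighborSet v))) ≤ s

/-- The minimum of `χ(G[X])` over all subsets `X ⊆ V(G)` spanning exactly `p` colours
of `σ` (a rainbow cover of `σ` when `σ` uses exactly `p` colours). -/
noncomputable def minRainbowChrom {V : Type*} (G : SimpleGraph V) (σ : V → ℕ) (p : ℕ) : ℕ :=
  sInf {c : ℕ | ∃ X : Set V, (σ '' X).ncard = p ∧ c = chromNum (G.induce X)}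

/-- `f_G(p)`: the maximum, over all proper colourings `σ` of `G` using exactly `p`
colours, of the minimum chromatic number of a rainbow cover of `σ`. -/
noncomputable def fG {V : Type*} (G : SimpleGraph V) (p : ℕ) : ℕ :=
  sSup {m : ℕ | ∃ σ : V → ℕ, IsProperColoring G σ ∧ (σ '' Set.univ).ncard = p ∧
    m = minRainbowChrom G σ p}

/-- The closed neighbourhood `N[X]` of a set `X` of vertices. -/
def closedNbhd {V : Type*} (G : SimpleGraph V) (X : Set V) : Set V :=
  X ∪ {u : V | ∃ x ∈ X, G.Adj x u}

section AuxLemmas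
variable {V : Type*} {G : SimpleGraph V}

lemma walk_of_chain : ∀ (l : List V) (a b : V), List.Chain' G.Adj (a :: (l ++ [b])) →
    ∃ w : G.Walk a b, w.support = a :: (l ++ [b])
  | [], a, b, h => by
    rw [List.nil_append, List.Chain', List.isChain_pair] at h
    exact ⟨Walk.cons h Walk.nil, by simp⟩
  | c :: l, a, b, h => by
    rw [List.cons_append, List.Chain', List.isChain_cons_cons] at h
    obtain ⟨w, hw⟩ := walk_of_chain l c b h.2
    exact ⟨Walk.cons h.1 w, by simp [hw]⟩

lemma edge_mem_end {a b : V} (w : G.Walk a b) : ∀ (x y : V),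
    x ∉ w.support.dropLast → s(x, y) ∈ w.edges →
    x = b ∧ w.support.dropLast.getLast? = some y := by
  induction w with
  | nil => intro x y _ h; simp at h
  | @cons a c b hadj w ih =>
    intro x y hx he
    rw [Walk.edges_cons, List.mem_cons] at he
    rw [Walk.support_cons] at hx ⊢
    have hsne : w.support ≠ [] := w.support_ne_nil
    have hdl : (a :: w.support).dropLast = a :: w.support.dropLast := by
      cases hs : w.support with
      | nil => exact absurd hs hsne
      | cons d l => simp [hs]
    rw [hdl] at hx ⊢
    rcases he with h | h
    · rw [Sym2.eq_iff] at h
      rcases h with ⟨hxa, hyc⟩ | ⟨hxc, hya⟩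
      · exact absurd (hxa ▸ (List.mem_cons_self : a ∈ a :: w.support.dropLast)) hx
      · subst hxc; subst hya
        cases w with
        | nil => exact ⟨rfl, by simp⟩
        | @cons c d b h' w' =>
          exfalso
          apply hx
          right
          rw [Walk.support_cons]
          have : w'.support ≠ [] := w'.support_ne_nil
          cases hs : w'.support with
          | nil => exact absurd hs this
          | cons e l => rw [List.dropLast_cons₂]; exact List.mem_cons_self
    · have hx' : x ∉ w.support.dropLast := fun hh => hx (List.mem_cons_of_mem _ hh)
      obtain ⟨hxb, hy⟩ := ih x y hx' h
      refine ⟨hxb, ?_⟩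
      cases hl : w.support.dropLast with
      | nil => rw [hl] at hy; simp at hy
      | cons d m => rw [hl] at hy; rw [List.getLast?_cons_cons]; exact hy

lemma cyc_list (c : List V) (v : V) (hch : c.Chain' G.Adj) (hnd : c.Nodup)
    (hlen : 3 ≤ c.length) (hv : v ∉ c) (hne : c ≠ [])
    (h1 : G.Adj v (c.head hne)) (h2 : G.Adj (c.getLast hne) v) :
    ∃ w : G.Walk v v, w.IsCycle ∧ w.length = c.length + 1 := by
  have hchain : List.Chain' G.Adj (c ++ [v]) := by
    rw [List.Chain', List.isChain_append]
    refine ⟨hch, List.isChain_singleton v, ?_⟩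
    intro x hx y hy
    rw [List.getLast?_eq_getLast_of_ne_nil hne, Option.mem_some_iff] at hx
    simp only [List.head?_cons, Option.mem_some_iff] at hy
    subst hx; subst hy; exact h2
  have hceq : c.head hne :: (c.tail ++ [v]) = c ++ [v] := by
    rw [← List.cons_append, List.cons_head_tail hne]
  obtain ⟨w, hw⟩ := walk_of_chain c.tail (c.head hne) v (by rw [hceq]; exact hchain)
  rw [hceq] at hw
  have hwlen : w.length = c.length := by
    have := w.length_support
    rw [hw] at this
    simp at this
    omega
  refine ⟨Walk.cons h1 w, ?_, by simp [hwlen]⟩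
  rw [Walk.cons_isCycle_iff]
  constructor
  · rw [Walk.isPath_def, hw, List.nodup_append]
    refine ⟨hnd, List.nodup_singleton v, ?_⟩
    intro a ha b hav
    rw [List.mem_singleton] at hav
    exact fun hab => hv (by rw [← hav, ← hab]; exact ha)
  · intro hmem
    have hvdl : v ∉ w.support.dropLast := by
      rw [hw, List.dropLast_concat]; exact hv
    obtain ⟨-, hy⟩ := edge_mem_end w v (c.head hne) hvdl hmem
    rw [hw, List.dropLast_concat, List.getLast?_eq_getLast_of_ne_nil hne,
      Option.some_inj] at hy
    -- hy : c.getLast hne = c.head hne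
    rw [List.getLast_eq_getElem, List.head_eq_getElem_zero hne] at hy
    have h := (hnd.getElem_inj_iff).mp hy
    omega

lemma false_of_fun {ℓ : ℕ} (hℓ : 3 ≤ ℓ) (hc : CycleLenFree G (ℓ + 1)) (v : V) (g : ℕ → V)
    (hadj : ∀ d, d + 1 < ℓ → G.Adj (g d) (g (d + 1)))
    (hinj : ∀ d d', d < ℓ → d' < ℓ → g d = g d' → d = d')
    (hv : ∀ d < ℓ, g d ≠ v)
    (h1 : G.Adj v (g 0)) (h2 : G.Adj (g (ℓ - 1)) v) : False := by
  set c : List V := (List.range ℓ).map g with hcdef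
  have hlen : c.length = ℓ := by simp [hcdef]
  have hne : c ≠ [] := by
    intro h; rw [h] at hlen; simp at hlen; omega
  have hchain : c.Chain' G.Adj := by
    rw [List.Chain', List.isChain_iff_getElem]
    intro i hi
    rw [hlen] at hi
    simp only [List.get_eq_getElem, hcdef, List.getElem_map, List.getElem_range]
    exact hadj i (by omega)
  have hnd : c.Nodup := by
    refine List.Nodup.map_on ?_ (List.nodup_range)
    intro x hx y hy hxy
    exact hinj x y (List.mem_range.1 hx) (List.mem_range.1 hy) hxy
  have hvc : v ∉ c := by
    intro h
    obtain ⟨d, hd, hdv⟩ := List.mem_map.1 h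
    exact hv d (List.mem_range.1 hd) hdv
  have hhead : c.head hne = g 0 := by
    rw [List.head_eq_getElem_zero]
    simp [hcdef]
  have hlast : c.getLast hne = g (ℓ - 1) := by
    rw [List.getLast_eq_getElem]
    simp [hcdef, hlen]
  obtain ⟨w, hw1, hw2⟩ := cyc_list c v hchain hnd (by omega) hvc hne
    (by rw [hhead]; exact h1) (by rw [hlast]; exact h2)
  exact hc v w hw1 (by rw [hw2, hlen])

lemma greedy_colorable [DecidableEq V] [DecidableRel G.Adj] {k : ℕ} (hk : 0 < k)
    (F : Finset V)
    (hF : ∀ T ⊆ F, T.Nonempty → ∃ a ∈ T, (T.filter (G.Adj a)).card < k) :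
    ∃ f : V → Fin k, ∀ x ∈ F, ∀ y ∈ F, G.Adj x y → f x ≠ f y := by
  obtain ⟨n, hn⟩ : ∃ n, F.card ≤ n := ⟨F.card, le_rfl⟩
  induction n generalizing F with
  | zero =>
    have : F = ∅ := Finset.card_eq_zero.1 (Nat.le_zero.1 hn)
    subst this
    exact ⟨fun _ => ⟨0, hk⟩, by simp⟩
  | succ n ih =>
    rcases F.eq_empty_or_nonempty with rfl | hFne
    · exact ⟨fun _ => ⟨0, hk⟩, by simp⟩
    · obtain ⟨a, haF, hdeg⟩ := hF F le_rfl hFne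
      have hsub : F.erase a ⊆ F := F.erase_subset a
      obtain ⟨f, hf⟩ := ih (F.erase a) (fun T hT => hF T (hT.trans hsub))
        (by have := Finset.card_erase_of_mem haF; omega)
      have himg : ((F.filter (G.Adj a)).image f).card < k :=
        lt_of_le_of_lt Finset.card_image_le hdeg
      have hex : ∃ c : Fin k, c ∉ (F.filter (G.Adj a)).image f := by
        by_contra h
        push_neg at h
        have hsub2 : (Finset.univ : Finset (Fin k)) ⊆ (F.filter (G.Adj a)).image f :=
          fun c _ => h c
        have := Finset.card_le_card hsub2
        simp at this
        omega
      obtain ⟨c, hc⟩ := hex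
      refine ⟨fun x => if x = a then c else f x, ?_⟩
      intro x hx y hy hadj
      by_cases hxa : x = a <;> by_cases hya : y = a
      · exfalso; rw [hxa, hya] at hadj; exact G.loopless.irrefl a hadj
      · subst hxa
        simp only [eq_self_iff_true, if_true, if_neg hya]
        intro h
        exact hc (h ▸ Finset.mem_image_of_mem f (Finset.mem_filter.2 ⟨hy, hadj⟩))
      · subst hya
        simp only [eq_self_iff_true, if_true, if_neg hxa]
        intro h
        exact hc (h.symm ▸ Finset.mem_image_of_mem f (Finset.mem_filter.2 ⟨hx, hadj.symm⟩))
      · simp only [if_neg hxa, if_neg hya]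
        exact hf x (Finset.mem_erase.2 ⟨hxa, hx⟩) y (Finset.mem_erase.2 ⟨hya, hy⟩) hadj

lemma exists_maximal_path [DecidableEq V] (T : Finset V) :
    ∀ (n : ℕ) (z : V) (ls : List V), (z :: ls).Nodup → (∀ x ∈ z :: ls, x ∈ T) →
      (z :: ls).Chain' G.Adj → T.card ≤ (z :: ls).length + n →
      ∃ (z' : V) (ls' : List V), (z' :: ls').Nodup ∧ (∀ x ∈ z' :: ls', x ∈ T) ∧
        (z' :: ls').Chain' G.Adj ∧ ∀ y ∈ T, G.Adj z' y → y ∈ z' :: ls' := by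
  intro n
  induction n with
  | zero =>
    intro z ls h1 h2 h3 h4
    refine ⟨z, ls, h1, h2, h3, ?_⟩
    intro y hy hadj
    by_contra hyl
    have hnd : (y :: z :: ls).Nodup := List.nodup_cons.2 ⟨hyl, h1⟩
    have hsub : (y :: z :: ls).toFinset ⊆ T := by
      intro x hx
      rw [List.mem_toFinset] at hx
      rcases List.mem_cons.1 hx with rfl | hx
      · exact hy
      · exact h2 x hx
    have hcard := Finset.card_le_card hsub
    rw [List.toFinset_card_of_nodup hnd] at hcard
    simp only [List.length_cons] at hcard h4
    omega
  | succ n ih =>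
    intro z ls h1 h2 h3 h4
    by_cases hmax : ∀ y ∈ T, G.Adj z y → y ∈ z :: ls
    · exact ⟨z, ls, h1, h2, h3, hmax⟩
    · push_neg at hmax
      obtain ⟨y, hyT, hadj, hyl⟩ := hmax
      refine ih y (z :: ls) (List.nodup_cons.2 ⟨hyl, h1⟩) ?_
        (List.isChain_cons_cons.2 ⟨hadj.symm, h3⟩) ?_
      · intro x hx
        rcases List.mem_cons.1 hx with rfl | hx
        · exact hyT
        · exact h2 x hx
      · simp only [List.length_cons] at h4 ⊢
        omega

lemma big_contra [DecidableEq V] [DecidableRel G.Adj] {ℓ : ℕ} (hℓ : 3 ≤ ℓ)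
    (hc : CycleLenFree G (ℓ + 1)) (v u : V) (huv : u ≠ v) (T : Finset V)
    (hT : ∀ x ∈ T, x = u ∨ G.Adj v x)
    (hmin : ∀ a ∈ T, ℓ - 1 ≤ (T.filter (G.Adj a)).card)
    (hTne : T.Nonempty) : False := by
  obtain ⟨a0, ha0⟩ := hTne
  obtain ⟨z, ls, hnd, hmem, hch, hmax⟩ := exists_maximal_path (G := G) T T.card a0 []
    (List.nodup_cons.2 (by simp)) (by intro x hx; simp at hx; subst hx; exact ha0)
    (List.isChain_singleton a0) (by simp)
  set l : List V := z :: ls with hldef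
  have hlen0 : 0 < l.length := by rw [hldef]; simp
  set q : ℕ → V := fun k => l.getD k a0 with hqdef
  have hq : ∀ {k : ℕ} (hk : k < l.length), q k = l[k]'hk := by
    intro k hk
    exact List.getD_eq_getElem _ _ hk
  have hqT : ∀ {k : ℕ}, k < l.length → q k ∈ T := by
    intro k hk; rw [hq hk]; exact hmem _ (List.getElem_mem _)
  have hqinj : ∀ {k k' : ℕ}, k < l.length → k' < l.length → q k = q k' → k = k' := by
    intro k k' hk hk' h
    rw [hq hk, hq hk'] at h
    exact hnd.getElem_inj_iff.1 h
  have hqadj : ∀ {k : ℕ}, k + 1 < l.length → G.Adj (q k) (q (k + 1)) := by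
    intro k hk
    rw [hq (by omega), hq hk]
    have := List.isChain_iff_getElem.1 hch k (by omega)
    simpa using this
  have hz : q 0 = z := by
    rw [hq hlen0]
    exact List.getElem_cons_zero z ls hlen0
  have hzT : z ∈ T := hmem z List.mem_cons_self
  have hNB : ℓ - 1 ≤ (T.filter (G.Adj z)).card := hmin z hzT
  set NI : Finset ℕ := (T.filter (G.Adj z)).image (fun y => l.idxOf y) with hNIdef
  have hNIcard : ℓ - 1 ≤ NI.card := by
    rw [hNIdef, Finset.card_image_of_injOn]
    · exact hNB
    · intro y1 h1 y2 h2 h12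
      have hy1l : y1 ∈ l := hmax y1 (Finset.mem_filter.1 h1).1 (Finset.mem_filter.1 h1).2
      have hy2l : y2 ∈ l := hmax y2 (Finset.mem_filter.1 h2).1 (Finset.mem_filter.1 h2).2
      exact (List.idxOf_inj hy1l).1 h12
  have hNImem : ∀ k ∈ NI, k < l.length ∧ 1 ≤ k ∧ G.Adj z (q k) := by
    intro k hk
    obtain ⟨y, hy, rfl⟩ := Finset.mem_image.1 hk
    obtain ⟨hyT, hyadj⟩ := Finset.mem_filter.1 hy
    have hyl : y ∈ l := hmax y hyT hyadj
    have hilt : l.idxOf y < l.length := List.idxOf_lt_length_iff.2 hyl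
    have hqy : q (l.idxOf y) = y := by rw [hq hilt]; exact List.getElem_idxOf hilt
    refine ⟨hilt, ?_, by rw [hqy]; exact hyadj⟩
    rcases Nat.eq_zero_or_pos (l.idxOf y) with h0 | h1
    · exfalso
      rw [h0] at hqy
      have hyz : y = z := by rw [← hqy, hz]
      rw [hyz] at hyadj
      exact G.loopless.irrefl z hyadj
    · exact h1
  have hNIne : NI.Nonempty := Finset.card_pos.1 (by omega)
  obtain ⟨hjlen, hjpos, hjadj⟩ := hNImem (NI.max' hNIne) (NI.max'_mem hNIne)
  obtain ⟨hilen, hipos, hiadj⟩ := hNImem (NI.min' hNIne) (NI.min'_mem hNIne)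
  set i := NI.min' hNIne with hidef
  set j := NI.max' hNIne with hjdef
  have hij : i + (ℓ - 2) ≤ j := by
    have hsub : NI ⊆ Finset.Icc i j := by
      intro k hk
      exact Finset.mem_Icc.2 ⟨NI.min'_le k hk, NI.le_max' k hk⟩
    have := Finset.card_le_card hsub
    rw [Nat.card_Icc] at this
    omega
  have hadjT : ∀ x, x ∈ T → x ≠ u → G.Adj v x := fun x hx hxu => (hT x hx).resolve_left hxu
  have run : ∀ g : ℕ → V, (∀ d, d + 1 < ℓ → G.Adj (g d) (g (d + 1))) →
      (∀ d d', d < ℓ → d' < ℓ → g d = g d' → d = d') →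
      (∀ d, d < ℓ → g d ∈ T) → g 0 ≠ u → g (ℓ - 1) ≠ u → False := by
    intro g hgadj hginj hgT h0 h1
    refine false_of_fun hℓ hc v g hgadj hginj ?_ ?_ ?_
    · intro d hd
      rcases hT _ (hgT d hd) with h | h
      · rw [h]; exact huv
      · exact h.ne'
    · exact hadjT _ (hgT 0 (by omega)) h0
    · exact (hadjT _ (hgT (ℓ - 1) (by omega)) h1).symm
  -- Candidate 1: z, q j, q (j-1), ..., q (j - (ℓ-2))
  have H1 : q 0 ≠ u → q (j - (ℓ - 2)) ≠ u → False := by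
    intro e0 e1
    refine run (fun d => match d with | 0 => q 0 | (d' + 1) => q (j - d')) ?_ ?_ ?_ e0 ?_
    · intro d hd
      rcases d with _ | d'
      · show G.Adj (q 0) (q (j - 0))
        rw [Nat.sub_zero, hz]
        exact hjadj
      · show G.Adj (q (j - d')) (q (j - (d' + 1)))
        have hk : (j - (d' + 1)) + 1 = j - d' := by omega
        have h := hqadj (k := j - (d' + 1)) (by omega)
        rw [hk] at h
        exact h.symm
    · intro d d' hdl hd'l h
      rcases d with _ | e <;> rcases d' with _ | e'
      · rfl
      · exfalso; have := hqinj hlen0 (by omega) h; omega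
      · exfalso; have := hqinj (by omega) hlen0 h; omega
      · have := hqinj (k := j - e) (k' := j - e') (by omega) (by omega) h; omega
    · intro d hd
      rcases d with _ | d'
      · exact hqT hlen0
      · exact hqT (by omega)
    · have hrw : ℓ - 1 = (ℓ - 2) + 1 := by omega
      rw [hrw]
      exact e1
  -- Candidate 2: z, q i, q (i+1), ..., q (i + (ℓ-2))
  have H2 : q 0 ≠ u → q (i + (ℓ - 2)) ≠ u → False := by
    intro e0 e1
    refine run (fun d => match d with | 0 => q 0 | (d' + 1) => q (i + d')) ?_ ?_ ?_ e0 ?_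
    · intro d hd
      rcases d with _ | d'
      · show G.Adj (q 0) (q (i + 0))
        rw [Nat.add_zero, hz]
        exact hiadj
      · show G.Adj (q (i + d')) (q (i + (d' + 1)))
        have hk : i + (d' + 1) = (i + d') + 1 := by omega
        rw [hk]
        exact hqadj (by omega)
    · intro d d' hdl hd'l h
      rcases d with _ | e <;> rcases d' with _ | e'
      · rfl
      · exfalso; have := hqinj hlen0 (by omega) h; omega
      · exfalso; have := hqinj (by omega) hlen0 h; omega
      · have := hqinj (k := i + e) (k' := i + e') (by omega) (by omega) h; omega
    · intro d hd
      rcases d with _ | d'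
      · exact hqT hlen0
      · exact hqT (by omega)
    · have hrw : ℓ - 1 = (ℓ - 2) + 1 := by omega
      rw [hrw]
      exact e1
  -- Candidate 3: q j, z, q i, q (i+1), ..., q (i + (ℓ-3))
  have H3 : q j ≠ u → q (i + (ℓ - 3)) ≠ u → False := by
    intro e0 e1
    refine run (fun d => match d with | 0 => q j | 1 => q 0 | (d' + 2) => q (i + d'))
      ?_ ?_ ?_ e0 ?_
    · intro d hd
      rcases d with _ | _ | d'
      · show G.Adj (q j) (q 0)
        rw [hz]
        exact hjadj.symm
      · show G.Adj (q 0) (q (i + 0))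
        rw [Nat.add_zero, hz]
        exact hiadj
      · show G.Adj (q (i + d')) (q (i + (d' + 1)))
        have hk : i + (d' + 1) = (i + d') + 1 := by omega
        rw [hk]
        exact hqadj (by omega)
    · intro d d' hdl hd'l h
      rcases d with _ | _ | e <;> rcases d' with _ | _ | e'
      · rfl
      · exfalso; have := hqinj hjlen hlen0 h; omega
      · exfalso; have := hqinj hjlen (by omega) h; omega
      · exfalso; have := hqinj hlen0 hjlen h; omega
      · rfl
      · exfalso; have := hqinj hlen0 (by omega) h; omega
      · exfalso; have := hqinj (by omega) hjlen h; omega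
      · exfalso; have := hqinj (by omega) hlen0 h; omega
      · have := hqinj (k := i + e) (k' := i + e') (by omega) (by omega) h; omega
    · intro d hd
      rcases d with _ | _ | d'
      · exact hqT hjlen
      · exact hqT hlen0
      · exact hqT (by omega)
    · have hrw : ℓ - 1 = (ℓ - 3) + 2 := by omega
      rw [hrw]
      exact e1
  by_cases hzu : q 0 = u
  · refine H3 ?_ ?_
    · intro h
      have := hqinj hjlen hlen0 (h.trans hzu.symm)
      omega
    · intro h
      have := hqinj (k := i + (ℓ - 3)) (by omega) hlen0 (h.trans hzu.symm)
      omega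
  · by_cases hb1 : q (j - (ℓ - 2)) = u
    · by_cases hb2 : q (i + (ℓ - 2)) = u
      · refine H3 ?_ ?_
        · intro h
          have h1 := hqinj hjlen (by omega) (h.trans hb2.symm)
          have h2 := hqinj (k := j - (ℓ - 2)) (k' := i + (ℓ - 2)) (by omega) (by omega)
            (hb1.trans hb2.symm)
          omega
        · intro h
          have := hqinj (k := i + (ℓ - 3)) (k' := i + (ℓ - 2)) (by omega) (by omega)
            (h.trans hb2.symm)
          omega
      · exact H2 hzu hb2
    · exact H1 hzu hb1

end AuxLemmas

/-- For every integer `ℓ ≥ 3`, every finite `C_{ℓ+1}`-free graph `G` is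
co-locally `(ℓ-1)`-colourable. -/
theorem cycleFree_coLocallyColourable {V : Type*} [Fintype V]
    (ℓ : ℕ) (hℓ : 3 ≤ ℓ) (G : SimpleGraph V) (hc : CycleLenFree G (ℓ + 1)) :
    ∀ v u : V, u ≠ v → chromNum (G.induce (insert u (G.neighborSet v))) ≤ ℓ - 1 := by
  classical
  intro v u huv
  set S : Set V := insert u (G.neighborSet v) with hS
  have hfin : S.Finite := Set.toFinite S
  set F : Finset V := hfin.toFinset with hF
  have hmemF : ∀ x, x ∈ F ↔ x ∈ S := fun x => Set.Finite.mem_toFinset hfin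
  have hgr : ∀ T ⊆ F, T.Nonempty → ∃ a ∈ T, (T.filter (G.Adj a)).card < ℓ - 1 := by
    intro T hTF hTne
    by_contra h
    push_neg at h
    refine big_contra hℓ hc v u huv T ?_ h hTne
    intro x hx
    have hxS : x ∈ S := (hmemF x).1 (hTF hx)
    rw [hS, Set.mem_insert_iff] at hxS
    rcases hxS with h' | h'
    · exact Or.inl h'
    · exact Or.inr h'
  obtain ⟨f, hf⟩ := greedy_colorable (G := G) (k := ℓ - 1) (by omega) F hgr
  have hcol : (G.induce S).Colorable (ℓ - 1) := by
    refine ⟨SimpleGraph.Coloring.mk (fun x => f x.1) ?_⟩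
    intro a b hab
    have hab' : G.Adj a.1 b.1 := hab
    exact hf a.1 ((hmemF a.1).2 a.2) b.1 ((hmemF b.1).2 b.2) hab'
  exact Nat.sInf_le hcol
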